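/- Let G be a graph and ℓ ≥ 1. Then either G contains ℓ pairwise vertex-disjoint induced copies of K_{ℓ,ℓ} with no edges between distinct copies, or G contains an induced subgraph H with χ(H) ≥ χ(G)/(2ℓ²) − 1 such that either ω(H) < ω(G) or H contains no induced copy of K_{ℓ,ℓ}. -/

import Mathlib

open SimpleGraph

private lemma cover_colorable {V : Type*} (G : SimpleGraph V) (s : Finset V)
    (A : V → Set V) (N m : ℕ)
    (hA : ∀ v ∈ s, (G.induce (A v)).Colorable N)
    (R : Set V) (hR : (G.induce R).Colorable m)
    (hcov : ∀ u, u ∉ R → ∃ v ∈ s, u ∈ A v) :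
    G.Colorable (m + s.card * N) := by
  classical
  obtain ⟨cR⟩ := hR
  -- total color function for each block
  have col : ∀ v u, v ∈ s → u ∈ A v → ℕ := fun v u hv hu => ((hA v hv).some ⟨u, hu⟩ : Fin N).val
  set colf : V → V → ℕ := fun v u =>
    if h : v ∈ s ∧ u ∈ A v then ((hA v h.1).some ⟨u, h.2⟩ : Fin N).val else 0 with hcolf
  have hcolf_lt : ∀ v u (hv : v ∈ s) (hu : u ∈ A v), colf v u < N := by
    intro v u hv hu
    simp only [hcolf, dif_pos (And.intro hv hu)]
    exact ((hA v hv).some ⟨u, hu⟩).isLt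
  have hcolf_ne : ∀ v u w (hv : v ∈ s) (hu : u ∈ A v) (hw : w ∈ A v),
      G.Adj u w → colf v u ≠ colf v w := by
    intro v u w hv hu hw hadj
    simp only [hcolf, dif_pos (And.intro hv hu), dif_pos (And.intro hv hw)]
    have := ((hA v hv).some).valid (by exact hadj :
      (G.induce (A v)).Adj ⟨u, hu⟩ ⟨w, hw⟩)
    exact fun h => this (Fin.ext h)
  have hcov' : ∀ u : V, ∃ v, u ∉ R → v ∈ s ∧ u ∈ A v := by
    intro u
    by_cases h : u ∈ R
    · exact ⟨u, fun h' => absurd h h'⟩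
    · obtain ⟨v, hv1, hv2⟩ := hcov u h
      exact ⟨v, fun _ => ⟨hv1, hv2⟩⟩
  choose f hf using hcov'
  let α := Fin m ⊕ ({x // x ∈ s} × Fin N)
  let C : V → α := fun u =>
    if h : u ∈ R then Sum.inl (cR ⟨u, h⟩)
    else Sum.inr (⟨f u, (hf u h).1⟩, ⟨colf (f u) u, hcolf_lt _ _ (hf u h).1 (hf u h).2⟩)
  have hvalid : ∀ {u w : V}, G.Adj u w → C u ≠ C w := by
    intro u w hadj heq
    simp only [C] at heq
    by_cases hu : u ∈ R <;> by_cases hw : w ∈ R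
    · rw [dif_pos hu, dif_pos hw] at heq
      injection heq with heq
      exact cR.valid (by exact hadj : (G.induce R).Adj ⟨u, hu⟩ ⟨w, hw⟩) heq
    · rw [dif_pos hu, dif_neg hw] at heq; cases heq
    · rw [dif_neg hu, dif_pos hw] at heq; cases heq
    · rw [dif_neg hu, dif_neg hw] at heq
      injection heq with heq
      have h1 : f u = f w := congrArg (fun p => (p.1 : {x // x ∈ s}).val) heq
      have h2 : colf (f u) u = colf (f w) w := congrArg (fun p => (p.2 : Fin N).val) heq
      rw [← h1] at h2
      have hwA : w ∈ A (f u) := h1 ▸ (hf w hw).2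
      exact hcolf_ne (f u) u w (hf u hu).1 (hf u hu).2 hwA hadj h2
  have hcol : G.Coloring α := Coloring.mk C hvalid
  have hcard : Fintype.card α = m + s.card * N := by
    simp [α, Fintype.card_coe]
  exact hcard ▸ hcol.colorable


private lemma closed_nbhd_colorable {V : Type*} (G : SimpleGraph V) (v : V) (n : ℕ)
    (h : (G.induce (G.neighborSet v)).Colorable n) :
    (G.induce (insert v (G.neighborSet v))).Colorable (n + 1) := by
  classical
  obtain ⟨c⟩ := h
  refine ⟨Coloring.mk (fun u => if hu : u.1 = v then Fin.last n else
    (c ⟨u.1, (Set.mem_insert_iff.mp u.2).resolve_left hu⟩).castSucc) ?_⟩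
  intro a b hab heq
  have hab' : G.Adj a.1 b.1 := hab
  by_cases ha : a.1 = v <;> by_cases hb : b.1 = v
  · rw [ha, hb] at hab'
    exact G.loopless.irrefl v hab'
  · rw [dif_pos ha, dif_neg hb] at heq
    exact (Fin.castSucc_lt_last _).ne' heq
  · rw [dif_neg ha, dif_pos hb] at heq
    exact (Fin.castSucc_lt_last _).ne heq
  · rw [dif_neg ha, dif_neg hb] at heq
    exact c.valid (by exact hab' : (G.induce (G.neighborSet v)).Adj ⟨a.1, _⟩ ⟨b.1, _⟩)
      (Fin.castSucc_inj.mp heq)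

private lemma nbhd_cliqueNum_lt {V : Type*} [Fintype V] (G : SimpleGraph V) (v : V) :
    (G.induce (G.neighborSet v)).cliqueNum < G.cliqueNum := by
  classical
  haveI : Fintype ↥(G.neighborSet v) := Fintype.ofFinite _
  obtain ⟨s, hs⟩ := (G.induce (G.neighborSet v)).exists_isNClique_cliqueNum
  have hvim : v ∉ s.image Subtype.val := by
    simp only [Finset.mem_image]
    rintro ⟨⟨x, hx⟩, -, h⟩
    obtain rfl : x = v := h
    exact G.loopless.irrefl _ hx
  have hclique : G.IsClique ↑(insert v (s.image Subtype.val)) := by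
    rw [Finset.coe_insert]
    intro a ha b hb hne
    rcases ha with rfl | ha <;> rcases hb with rfl | hb
    · exact absurd rfl hne
    · simp only [Finset.coe_image, Set.mem_image, Finset.mem_coe] at hb
      obtain ⟨x, _, rfl⟩ := hb
      exact x.2
    · simp only [Finset.coe_image, Set.mem_image, Finset.mem_coe] at ha
      obtain ⟨x, _, rfl⟩ := ha
      exact (x.2 : G.Adj b x.1).symm
    · simp only [Finset.coe_image, Set.mem_image, Finset.mem_coe] at ha hb
      obtain ⟨x, hx, rfl⟩ := ha
      obtain ⟨y, hy, rfl⟩ := hb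
      have hxy : x ≠ y := fun h => hne (by rw [h])
      exact hs.isClique hx hy hxy
  have hcard : (insert v (s.image Subtype.val)).card
      = (G.induce (G.neighborSet v)).cliqueNum + 1 := by
    rw [Finset.card_insert_of_notMem hvim,
      Finset.card_image_of_injective _ Subtype.val_injective, hs.card_eq]
  have := hclique.card_le_cliqueNum (t := insert v (s.image Subtype.val))
  omega


private lemma arith_key (ℓ g mR B Dc t : ℕ) (hℓ : 1 ≤ ℓ) (ht : t < ℓ)
    (hDc : Dc ≤ t * (2 * ℓ)) (hg1 : g ≤ mR + Dc * (B + 1))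
    (hcase : 2 * ℓ ^ 2 * (mR + 1) < g) : g ≤ 2 * ℓ ^ 2 * (B + 1) := by
  have hg2 : g ≤ mR + (ℓ - 1) * (2 * ℓ) * (B + 1) := by
    have h2 : Dc ≤ (ℓ - 1) * (2 * ℓ) :=
      hDc.trans (Nat.mul_le_mul_right _ (by omega))
    calc g ≤ mR + Dc * (B + 1) := hg1
      _ ≤ mR + (ℓ - 1) * (2 * ℓ) * (B + 1) :=
        Nat.add_le_add_left (Nat.mul_le_mul_right _ h2) _
  zify at hg2 hcase ⊢
  have hℓ1 : (1 : ℤ) ≤ (ℓ : ℤ) := by exact_mod_cast hℓ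
  have hsub : ((ℓ - 1 : ℕ) : ℤ) = (ℓ : ℤ) - 1 := by
    have h1 : 1 ≤ ℓ := hℓ
    push_cast [h1]
    ring
  rw [hsub] at hg2
  by_contra hcon
  push_neg at hcon
  set x : ℤ := (B : ℤ) + 1 with hxdef
  have hB0 : (0 : ℤ) ≤ (B : ℤ) := Int.natCast_nonneg B
  have hx : 1 ≤ x := by linarith
  have hmR0 : (0 : ℤ) ≤ (mR : ℤ) := Int.natCast_nonneg mR
  have key2 : 2 * (ℓ : ℤ) * x < (mR : ℤ) := by nlinarith [hg2, hcon]
  have h2lx : x ≤ 2 * (ℓ : ℤ) * x := by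
    nlinarith [mul_nonneg (by linarith : (0:ℤ) ≤ 2 * (ℓ:ℤ) - 1) (by linarith : (0:ℤ) ≤ x)]
  have hmRx : x < (mR : ℤ) := by linarith
  have h5 : ((ℓ:ℤ) - 1) * (2 * ℓ) * x ≤ ((ℓ:ℤ) - 1) * (2 * ℓ) * mR :=
    mul_le_mul_of_nonneg_left hmRx.le
      (by nlinarith [mul_nonneg (by linarith : (0:ℤ) ≤ (ℓ:ℤ) - 1) (by linarith : (0:ℤ) ≤ (ℓ:ℤ))])
  have h6 : 2 * (ℓ:ℤ) ^ 2 * (mR + 1) < mR + ((ℓ:ℤ) - 1) * (2 * ℓ) * mR := by linarith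
  nlinarith [h6, hmR0, hℓ1, mul_nonneg (by linarith : (0:ℤ) ≤ 2 * (ℓ:ℤ) - 1) hmR0,
    mul_le_mul_of_nonneg_left hℓ1 (by linarith : (0:ℤ) ≤ (ℓ:ℤ))]

theorem stmt16 {V : Type*} [Fintype V] (G : SimpleGraph V) (ℓ : ℕ) (hℓ : 1 ≤ ℓ) :
    (∃ S : Fin ℓ → Set V,
      (∀ i j, i ≠ j → Disjoint (S i) (S j)) ∧
      (∀ i, Nonempty (G.induce (S i) ≃g completeBipartiteGraph (Fin ℓ) (Fin ℓ))) ∧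
      (∀ i j, i ≠ j → ∀ a ∈ S i, ∀ b ∈ S j, ¬ G.Adj a b)) ∨
    (∃ S : Set V,
      G.chromaticNumber ≤ 2 * ℓ ^ 2 * ((G.induce S).chromaticNumber + 1) ∧
      ((G.induce S).cliqueNum < G.cliqueNum ∨
        ∀ T : Set V, T ⊆ S →
          ¬ Nonempty (G.induce T ≃g completeBipartiteGraph (Fin ℓ) (Fin ℓ)))) := by
  classical
  set P : ℕ → Prop := fun n => ∃ S : Fin n → Set V,
      (∀ i j, i ≠ j → Disjoint (S i) (S j)) ∧
      (∀ i, Nonempty (G.induce (S i) ≃g completeBipartiteGraph (Fin ℓ) (Fin ℓ))) ∧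
      (∀ i j, i ≠ j → ∀ a ∈ S i, ∀ b ∈ S j, ¬ G.Adj a b) with hPdef
  have hP0 : P 0 := ⟨fun i => i.elim0, fun i => i.elim0, fun i => i.elim0, fun i => i.elim0⟩
  have hbound : ∀ n, P n → n ≤ Fintype.card V := by
    rintro n ⟨S, hdisj, hiso, -⟩
    have hx : ∀ i, ∃ x, x ∈ S i := by
      intro i
      obtain ⟨e⟩ := hiso i
      exact ⟨(e.symm (Sum.inl ⟨0, hℓ⟩)).1, (e.symm (Sum.inl ⟨0, hℓ⟩)).2⟩
    choose x hx using hx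
    have hinj : Function.Injective x := by
      intro i j hij
      by_contra hne
      exact Set.disjoint_left.mp (hdisj i j hne) (hx i) (hij ▸ hx j)
    simpa using Fintype.card_le_of_injective x hinj
  set t := Nat.findGreatest P (Fintype.card V) with htdef
  have hPt : P t := Nat.findGreatest_spec (Nat.zero_le _) hP0
  by_cases hlt : ℓ ≤ t
  · left
    obtain ⟨S, h1, h2, h3⟩ := hPt
    have hinj : Function.Injective (Fin.castLE hlt) := Fin.castLE_injective hlt
    exact ⟨fun i => S (Fin.castLE hlt i),
      fun i j hij => h1 _ _ (hinj.ne hij),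
      fun i => h2 _,
      fun i j hij => h3 _ _ (hinj.ne hij)⟩
  · right
    push_neg at hlt
    have hmax : ¬ P (t + 1) := fun h =>
      Nat.findGreatest_is_greatest (lt_add_one t) (hbound _ h) h
    obtain ⟨S, hdisj, hiso, hnadj⟩ := hPt
    set D : Finset V := Finset.univ.biUnion (fun i : Fin t => (Set.toFinite (S i)).toFinset)
      with hDdef
    have hmemD : ∀ {i : Fin t} {x}, x ∈ S i → x ∈ D := by
      intro i x hx
      simp only [hDdef, Finset.mem_biUnion, Finset.mem_univ, true_and,
        Set.Finite.mem_toFinset]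
      exact ⟨i, hx⟩
    have hcardSi : ∀ i : Fin t, ((Set.toFinite (S i)).toFinset).card = 2 * ℓ := by
      intro i
      obtain ⟨e⟩ := hiso i
      rw [← Set.ncard_eq_toFinset_card (S i) (Set.toFinite (S i)), ← Nat.card_coe_set_eq,
        Nat.card_congr e.toEquiv]
      simp [Nat.card_eq_fintype_card]
      ring
    have hcardD : D.card ≤ t * (2 * ℓ) := by
      have h := Finset.card_biUnion_le_card_mul Finset.univ
        (fun i : Fin t => (Set.toFinite (S i)).toFinset) (2 * ℓ)
        (fun i _ => (hcardSi i).le)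
      calc D.card ≤ (Finset.univ : Finset (Fin t)).card * (2 * ℓ) := h
        _ = t * (2 * ℓ) := by rw [Finset.card_univ, Fintype.card_fin]
    set A : V → Set V := fun w => insert w (G.neighborSet w) with hAdef
    set R : Set V := {u | ∀ w ∈ D, u ∉ A w} with hRdef
    -- chromatic data
    set mR : ℕ := (G.induce R).chromaticNumber.toNat with hmRdef
    have hmRcol : (G.induce R).Colorable mR := colorable_chromaticNumber_of_fintype _
    have hmReq : (G.induce R).chromaticNumber = (mR : ℕ∞) :=
      ((ENat.coe_toNat ((hmRcol.chromaticNumber_le.trans_lt (ENat.coe_lt_top mR)).ne))).symm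
    set χN : V → ℕ := fun w => (G.induce (G.neighborSet w)).chromaticNumber.toNat with hχNdef
    have hχNcol : ∀ w, (G.induce (G.neighborSet w)).Colorable (χN w) :=
      fun w => colorable_chromaticNumber_of_fintype _
    have hχNeq : ∀ w, (G.induce (G.neighborSet w)).chromaticNumber = ((χN w : ℕ) : ℕ∞) :=
      fun w => ((ENat.coe_toNat (((hχNcol w).chromaticNumber_le.trans_lt
        (ENat.coe_lt_top _)).ne))).symm
    set B : ℕ := D.sup χN with hBdef
    have hGcol : G.Colorable (mR + D.card * (B + 1)) := by
      apply cover_colorable G D A (B + 1) mR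
      · intro w hw
        exact (closed_nbhd_colorable G w (χN w) (hχNcol w)).mono
          (by have := Finset.le_sup (f := χN) hw; omega)
      · exact hmRcol
      · intro u hu
        simp only [hRdef, Set.mem_setOf_eq, not_forall] at hu
        obtain ⟨w, hw, hw2⟩ := hu
        exact ⟨w, hw, not_not.mp hw2⟩
    set g : ℕ := G.chromaticNumber.toNat with hgdef
    have hgcol : G.Colorable g := colorable_chromaticNumber_of_fintype _
    have hgeq : G.chromaticNumber = (g : ℕ∞) :=
      ((ENat.coe_toNat ((hgcol.chromaticNumber_le.trans_lt (ENat.coe_lt_top g)).ne))).symm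
    have hg1 : g ≤ mR + D.card * (B + 1) := by
      have := hGcol.chromaticNumber_le
      rw [hgeq] at this
      exact_mod_cast this
    by_cases hcase : g ≤ 2 * ℓ ^ 2 * (mR + 1)
    · refine ⟨R, ?_, Or.inr ?_⟩
      · rw [hgeq, hmReq]
        calc (g : ℕ∞) ≤ ((2 * ℓ ^ 2 * (mR + 1) : ℕ) : ℕ∞) := by exact_mod_cast hcase
          _ = 2 * (ℓ : ℕ∞) ^ 2 * ((mR : ℕ∞) + 1) := by push_cast; ring
      · rintro T hTR ⟨e⟩
        apply hmax
        have hRS : ∀ (i : Fin t), ∀ x ∈ S i, ∀ b ∈ R, x ≠ b ∧ ¬ G.Adj x b := by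
          intro i x hx b hb
          have hbA : b ∉ A x := hb x (hmemD hx)
          simp only [hAdef, Set.mem_insert_iff, mem_neighborSet, not_or] at hbA
          exact ⟨fun h => hbA.1 h.symm, hbA.2⟩
        have hTdisj : ∀ i : Fin t, Disjoint (S i) T :=
          fun i => Set.disjoint_left.mpr (fun {x} hx hxT => (hRS i x hx x (hTR hxT)).1 rfl)
        refine ⟨Fin.snoc S T, ?_, ?_, ?_⟩
        · intro i j hij
          induction i using Fin.lastCases with
          | last =>
            induction j using Fin.lastCases with
            | last => exact absurd rfl hij
            | cast j' =>
              rw [Fin.snoc_last, Fin.snoc_castSucc]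
              exact (hTdisj j').symm
          | cast i' =>
            induction j using Fin.lastCases with
            | last =>
              rw [Fin.snoc_last, Fin.snoc_castSucc]
              exact hTdisj i'
            | cast j' =>
              rw [Fin.snoc_castSucc, Fin.snoc_castSucc]
              exact hdisj i' j' (fun h => hij (by rw [h]))
        · intro i
          induction i using Fin.lastCases with
          | last => rw [Fin.snoc_last]; exact ⟨e⟩
          | cast i' => rw [Fin.snoc_castSucc]; exact hiso i'
        · intro i j hij a ha b hb
          induction i using Fin.lastCases with
          | last =>
            induction j using Fin.lastCases with
            | last => exact absurd rfl hij
            | cast j' =>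
              rw [Fin.snoc_last] at ha
              rw [Fin.snoc_castSucc] at hb
              exact fun h => (hRS j' b hb a (hTR ha)).2 h.symm
          | cast i' =>
            induction j using Fin.lastCases with
            | last =>
              rw [Fin.snoc_castSucc] at ha
              rw [Fin.snoc_last] at hb
              exact (hRS i' a ha b (hTR hb)).2
            | cast j' =>
              rw [Fin.snoc_castSucc] at ha hb
              exact hnadj i' j' (fun h => hij (by rw [h])) a ha b hb
    · push_neg at hcase
      have hDne : D.Nonempty := by
        rw [Finset.nonempty_iff_ne_empty]
        intro h
        rw [h] at hg1
        simp only [Finset.card_empty, Nat.zero_mul, Nat.add_zero] at hg1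
        have hpos : 0 < 2 * ℓ ^ 2 := by positivity
        have := Nat.le_mul_of_pos_left (mR + 1) hpos
        omega
      obtain ⟨v, hvD, hvB⟩ := Finset.exists_mem_eq_sup D hDne χN
      refine ⟨G.neighborSet v, ?_, Or.inl (nbhd_cliqueNum_lt G v)⟩
      rw [hgeq, hχNeq v]
      have hχNvB : χN v = B := hvB.symm
      have harith : g ≤ 2 * ℓ ^ 2 * (χN v + 1) := by
        rw [hχNvB]
        exact arith_key ℓ g mR B D.card t hℓ hlt hcardD hg1 hcase
      calc (g : ℕ∞) ≤ ((2 * ℓ ^ 2 * (χN v + 1) : ℕ) : ℕ∞) := by exact_mod_cast harith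
        _ = 2 * (ℓ : ℕ∞) ^ 2 * (((χN v : ℕ) : ℕ∞) + 1) := by push_cast; ring
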